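/- Let n ≥ 2 be an integer and let s be an odd positive integer. Then the generalised quaternion group Q_{2^n s} of order 2^n s (QuaternionGroup (2^{n-2}·s)) has exactly one subgroup of cardinality s, and the dihedral group D_{2^n s} of order 2^n s (DihedralGroup (2^{n-1}·s)) has exactly one subgroup of cardinality s; in each case this subgroup is the cyclic subgroup generated by x^{2^{n-1}}, where x is the distinguished element of order 2^{n-1}s. -/

import Mathlib

lemma subgroup_eq_of_le_of_card_eq {G : Type*} [Group G] {H K : Subgroup G}
    (hf : (K : Set G).Finite) (hle : H ≤ K) (hc : Nat.card H = Nat.card K) : H = K := by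
  apply SetLike.coe_injective
  apply Set.eq_of_subset_of_ncard_le hle _ hf
  rw [← Nat.card_coe_set_eq, ← Nat.card_coe_set_eq]
  exact le_of_eq hc.symm

lemma key_unique {G : Type*} [Group G] [Finite G] (x : G) (k s : ℕ) (hs : 0 < s)
    (hsodd : Odd s) (hk : 0 < k) (hx : orderOf x = k * s)
    (hform : ∀ g : G, Even (orderOf g) ∨ ∃ j : ℕ, g = x ^ j) :
    ∀ H : Subgroup G, Nat.card H = s ↔ H = Subgroup.zpowers (x ^ k) := by
  have hcard : Nat.card (Subgroup.zpowers (x ^ k)) = s := by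
    rw [Nat.card_zpowers, orderOf_pow, hx]
    rw [Nat.gcd_comm, Nat.gcd_eq_left (dvd_mul_right k s), Nat.mul_div_cancel_left s hk]
  intro H
  constructor
  · intro hH
    refine subgroup_eq_of_le_of_card_eq (Set.toFinite _) ?_ (by rw [hH, hcard])
    intro g hg
    have hgs : g ^ s = 1 := by
      have : (⟨g, hg⟩ : H) ^ s = 1 := by rw [← hH]; exact pow_card_eq_one'
      simpa using congrArg (Subtype.val) this
    have hdvd : orderOf g ∣ s := orderOf_dvd_of_pow_eq_one hgs
    rcases hform g with heven | ⟨j, rfl⟩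
    · exfalso
      have : (2 : ℕ) ∣ s := dvd_trans heven.two_dvd hdvd
      exact (Nat.not_even_iff_odd.mpr hsodd) (even_iff_two_dvd.mpr this)
    · have hj : orderOf x ∣ j * s := by
        rw [orderOf_dvd_iff_pow_eq_one, pow_mul]
        exact hgs
      rw [hx] at hj
      have hkj : k ∣ j := (Nat.mul_dvd_mul_iff_right hs).mp hj
      obtain ⟨t, rfl⟩ := hkj
      rw [pow_mul]
      exact Subgroup.pow_mem _ (Subgroup.mem_zpowers _) t
  · rintro rfl; exact hcard

/-- Lemma 11.1: for `n ≥ 2` and `s` odd, the generalised quaternion group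
`Q_{2^n s}` (resp. the dihedral group `D_{2^n s}`) has exactly one subgroup of
cardinality `s`, namely the cyclic subgroup generated by `x ^ (2^(n-1))`, where `x`
is the distinguished element of order `2^(n-1) s`. -/
theorem unique_subgroup_of_card_odd_part (n s : ℕ) (hn : 2 ≤ n) (hs : Odd s)
    (hs' : 0 < s) :
    (∀ H : Subgroup (QuaternionGroup (2 ^ (n - 2) * s)),
      Nat.card H = s ↔ H = Subgroup.zpowers ((QuaternionGroup.a 1) ^ 2 ^ (n - 1))) ∧
    (∀ H : Subgroup (DihedralGroup (2 ^ (n - 1) * s)),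
      Nat.card H = s ↔ H = Subgroup.zpowers ((DihedralGroup.r 1) ^ 2 ^ (n - 1))) := by
  have hpow : 2 * 2 ^ (n - 2) = 2 ^ (n - 1) := by
    rw [← pow_succ']
    congr 1
    omega
  have hm : 0 < 2 ^ (n - 2) * s := Nat.mul_pos (Nat.pow_pos (by norm_num)) hs'
  have hm' : 0 < 2 ^ (n - 1) * s := Nat.mul_pos (Nat.pow_pos (by norm_num)) hs'
  haveI : NeZero (2 ^ (n - 2) * s) := ⟨hm.ne'⟩
  haveI : NeZero (2 ^ (n - 1) * s) := ⟨hm'.ne'⟩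
  constructor
  · apply key_unique _ _ _ hs' hs (Nat.pow_pos (by norm_num))
    · rw [QuaternionGroup.orderOf_a_one, ← mul_assoc, hpow]
    · intro g
      cases g with
      | a i =>
        right
        exact ⟨i.val, by rw [QuaternionGroup.a_one_pow, ZMod.natCast_val, ZMod.cast_id]⟩
      | xa i =>
        left
        rw [QuaternionGroup.orderOf_xa]
        decide
  · apply key_unique _ _ _ hs' hs (Nat.pow_pos (by norm_num))
    · rw [DihedralGroup.orderOf_r_one]
    · intro g
      cases g with
      | r i =>
        right
        exact ⟨i.val, by rw [DihedralGroup.r_one_pow, ZMod.natCast_val, ZMod.cast_id]⟩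
      | sr i =>
        left
        rw [DihedralGroup.orderOf_sr]
        norm_num
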